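/- Let K be an algebraically closed field of characteristic 0, complete with respect to a nontrivial nonarchimedean absolute value |·|. Let d ≥ 2, t ∈ K, and Q(z) = z^d + t, and assume the forward orbit of 0 under Q is finite. Let w ∈ K satisfy Q^k(w) = w for some k ≥ 1 and set λ = (Q^k)'(w) = ∏_{i=0}^{k−1} Q'(Q^i(w)); assume λ ≠ 0. Then: if |d| < 1 then |λ| < 1, and if |d| = 1 then |λ| = 1. -/

import Mathlib

section Helpers

variable {K : Type*} [NormedField K]

lemma na_sub (hna : IsNonarchimedean (fun x : K => ‖x‖)) (a b : K) :
    ‖a - b‖ ≤ max ‖a‖ ‖b‖ := by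
  have h := hna a (-b)
  simpa [sub_eq_add_neg] using h

lemma na_sum (hna : IsNonarchimedean (fun x : K => ‖x‖)) {ι : Type*} (s : Finset ι)
    (f : ι → K) (B : ℝ) (hB : 0 ≤ B) (h : ∀ i ∈ s, ‖f i‖ ≤ B) :
    ‖∑ i ∈ s, f i‖ ≤ B := by
  classical
  induction s using Finset.cons_induction with
  | empty => simpa using hB
  | cons a s ha ih =>
    rw [Finset.sum_cons]
    refine le_trans (hna _ _) (max_le (h a (Finset.mem_cons_self a s)) ?_)
    exact ih (fun i hi => h i (Finset.mem_cons_of_mem hi))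

lemma na_add_eq_left (hna : IsNonarchimedean (fun x : K => ‖x‖)) {a b : K}
    (h : ‖b‖ < ‖a‖) : ‖a + b‖ = ‖a‖ := by
  refine le_antisymm (le_trans (hna a b) (max_le le_rfl h.le)) ?_
  by_contra hlt
  push_neg at hlt
  have h2 : ‖a‖ ≤ max ‖a + b‖ ‖b‖ := by
    have := hna (a + b) (-b)
    simpa using this
  rcases max_cases ‖a + b‖ ‖b‖ with ⟨he, _⟩ | ⟨he, _⟩ <;> rw [he] at h2 <;> linarith

lemma pow_sub_pow_bound (hna : IsNonarchimedean (fun x : K => ‖x‖)) (a b : K) (n : ℕ)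
    (M : ℝ) (ha : ‖a‖ ≤ M) (hb : ‖b‖ ≤ M) :
    ‖a ^ n - b ^ n‖ ≤ ‖a - b‖ * M ^ (n - 1) := by
  have hM0 : 0 ≤ M := le_trans (norm_nonneg a) ha
  cases n with
  | zero =>
    simp only [pow_zero, sub_self, norm_zero]
    positivity
  | succ n =>
    have hid : (∑ i ∈ Finset.range (n+1), a ^ i * b ^ (n - i)) * (a - b)
        = a ^ (n+1) - b ^ (n+1) := by
      have := geom_sum₂_mul a b (n+1)
      simpa using this
    rw [← hid, norm_mul, mul_comm]
    have hsum : ‖∑ i ∈ Finset.range (n+1), a ^ i * b ^ (n - i)‖ ≤ M ^ n := by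
      refine na_sum hna _ _ _ (by positivity) ?_
      intro i hi
      rw [Finset.mem_range] at hi
      have hin : i ≤ n := Nat.lt_succ_iff.mp hi
      rw [norm_mul, norm_pow, norm_pow]
      calc ‖a‖ ^ i * ‖b‖ ^ (n - i) ≤ M ^ i * M ^ (n - i) := by
            exact mul_le_mul (pow_le_pow_left₀ (norm_nonneg a) ha i)
              (pow_le_pow_left₀ (norm_nonneg b) hb (n - i)) (by positivity) (by positivity)
        _ = M ^ n := by rw [← pow_add]; congr 1; omega
    have : (n + 1 - 1) = n := by omega
    rw [this]
    exact mul_le_mul_of_nonneg_left hsum (norm_nonneg _)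


/-- Tame collision: if `y ≠ v` but `y^d = v^d` and `‖d‖ = 1`, then `‖v‖ ≤ ‖y - v‖`. -/
lemma collision (hna : IsNonarchimedean (fun x : K => ‖x‖)) {d : ℕ} (hd : 2 ≤ d)
    (hdn : ‖(d : K)‖ = 1) {y v : K} (hyv : y ^ d = v ^ d) (hne : y ≠ v) :
    ‖v‖ ≤ ‖y - v‖ := by
  rcases eq_or_ne v 0 with rfl | hv0
  · simp
  -- norms are equal
  have hnorm : ‖y‖ = ‖v‖ := by
    have h1 : ‖y‖ ^ d = ‖v‖ ^ d := by rw [← norm_pow, ← norm_pow, hyv]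
    rcases lt_trichotomy ‖y‖ ‖v‖ with h | h | h
    · have := pow_lt_pow_left₀ h (norm_nonneg y) (by omega : d ≠ 0); linarith
    · exact h
    · have := pow_lt_pow_left₀ h (norm_nonneg v) (by omega : d ≠ 0); linarith
  set D : K := ∑ i ∈ Finset.range d, y ^ i * v ^ (d - 1 - i) with hD
  have hDzero : D = 0 := by
    have hid : D * (y - v) = y ^ d - v ^ d := geom_sum₂_mul y v d
    have : D * (y - v) = 0 := by rw [hid, hyv, sub_self]
    rcases mul_eq_zero.mp this with h | h
    · exact h
    · exact absurd (sub_eq_zero.mp h) hne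
  have hkey : (d : K) * v ^ (d - 1) = ∑ i ∈ Finset.range d, (v ^ i - y ^ i) * v ^ (d - 1 - i) := by
    have h1 : ∑ i ∈ Finset.range d, (v ^ i - y ^ i) * v ^ (d - 1 - i)
        = (∑ i ∈ Finset.range d, v ^ i * v ^ (d - 1 - i)) - D := by
      rw [hD, ← Finset.sum_sub_distrib]
      congr 1; ext i; ring
    have h2 : ∀ i ∈ Finset.range d, v ^ i * v ^ (d - 1 - i) = v ^ (d - 1) := by
      intro i hi
      rw [Finset.mem_range] at hi
      rw [← pow_add]; congr 1; omega
    rw [h1, Finset.sum_congr rfl h2, Finset.sum_const, Finset.card_range, hDzero, sub_zero,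
      nsmul_eq_mul]
  have hbound : ‖(d : K) * v ^ (d - 1)‖ ≤ ‖y - v‖ * ‖v‖ ^ (d - 2) := by
    rw [hkey]
    refine na_sum hna _ _ _ (by positivity) ?_
    intro i hi
    rw [Finset.mem_range] at hi
    rcases Nat.eq_zero_or_pos i with rfl | hi1
    · simp; positivity
    · rw [norm_mul, norm_pow]
      have h3 : ‖v ^ i - y ^ i‖ ≤ ‖v - y‖ * ‖v‖ ^ (i - 1) :=
        pow_sub_pow_bound hna v y i ‖v‖ le_rfl (le_of_eq hnorm)
      calc ‖v ^ i - y ^ i‖ * ‖v‖ ^ (d - 1 - i)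
          ≤ (‖v - y‖ * ‖v‖ ^ (i - 1)) * ‖v‖ ^ (d - 1 - i) := by
            exact mul_le_mul_of_nonneg_right h3 (by positivity)
        _ = ‖v - y‖ * ‖v‖ ^ (d - 2) := by
            rw [mul_assoc, ← pow_add]; congr 2; omega
        _ = ‖y - v‖ * ‖v‖ ^ (d - 2) := by rw [norm_sub_rev]
  have hlhs : ‖(d : K) * v ^ (d - 1)‖ = ‖v‖ * ‖v‖ ^ (d - 2) := by
    rw [norm_mul, norm_pow, hdn, one_mul]
    rw [show d - 1 = (d - 2) + 1 by omega, pow_succ, mul_comm]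
  rw [hlhs] at hbound
  have hv0' : (0:ℝ) < ‖v‖ := norm_pos_iff.mpr hv0
  have hpos : (0 : ℝ) < ‖v‖ ^ (d - 2) := by positivity
  exact le_of_mul_le_mul_right hbound hpos


/-- inside the closed unit ball, the orbit stays there -/
lemma iter_le_one (hna : IsNonarchimedean (fun x : K => ‖x‖)) {d : ℕ} {t : K}
    (hd : 1 ≤ d) (ht : ‖t‖ ≤ 1) {z : K} (hz : ‖z‖ ≤ 1) (m : ℕ) :
    ‖(fun z : K => z ^ d + t)^[m] z‖ ≤ 1 := by
  induction m with
  | zero => simpa using hz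
  | succ n ih =>
    rw [Function.iterate_succ_apply']
    refine le_trans (hna _ _) (max_le ?_ ht)
    simpa [norm_pow] using pow_le_one₀ (norm_nonneg _) ih

/-- escape: if `1 < ‖z‖` and `‖t‖ ≤ ‖z‖` then norms grow like `‖z‖^(d^m)` -/
lemma iter_escape (hna : IsNonarchimedean (fun x : K => ‖x‖)) {d : ℕ} {t : K}
    (hd : 2 ≤ d) {z : K} (h1 : 1 < ‖z‖) (h2 : ‖t‖ ≤ ‖z‖) (m : ℕ) :
    ‖(fun z : K => z ^ d + t)^[m] z‖ = ‖z‖ ^ (d ^ m) := by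
  induction m with
  | zero => simp
  | succ n ih =>
    rw [Function.iterate_succ_apply']
    have hgt : ‖t‖ < ‖((fun z : K => z ^ d + t)^[n] z) ^ d‖ := by
      rw [norm_pow, ih, ← pow_mul]
      calc ‖t‖ ≤ ‖z‖ := h2
        _ = ‖z‖ ^ 1 := (pow_one _).symm
        _ < ‖z‖ ^ (d ^ n * d) := by
          refine pow_lt_pow_right₀ h1 ?_
          have : 2 ^ 1 ≤ d ^ n * d := by
            calc 2 ^ 1 = 2 := by norm_num
              _ ≤ d := hd
              _ ≤ d ^ n * d := Nat.le_mul_of_pos_left d (Nat.pow_pos (by omega))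
          omega
    have := na_add_eq_left hna hgt
    rw [this, norm_pow, ih, ← pow_mul, pow_succ]


end Helpers


/-- Multipliers of periodic orbits of a post-critically finite unicritical polynomial
`Q(z) = z^d + t` over a complete algebraically closed nonarchimedean field of
characteristic zero: if the residual characteristic divides `d` (i.e. `|d| < 1`) then
`|λ| < 1`, and if it is prime to `d` (i.e. `|d| = 1`) then `|λ| = 1`. -/
theorem stmt13 (K : Type*) [NormedField K] [CompleteSpace K] [IsAlgClosed K] [CharZero K]
    (hna : IsNonarchimedean (fun x : K => ‖x‖))
    (hnontriv : ∃ x : K, ‖x‖ ≠ 0 ∧ ‖x‖ ≠ 1)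
    (d : ℕ) (hd : 2 ≤ d) (t : K)
    (hfin : (Set.range fun n : ℕ => (fun z : K => z ^ d + t)^[n] 0).Finite)
    (w : K) (k : ℕ) (hk : 1 ≤ k) (hw : (fun z : K => z ^ d + t)^[k] w = w)
    (lam : K)
    (hlam : lam = ∏ i ∈ Finset.range k, (d : K) * ((fun z : K => z ^ d + t)^[i] w) ^ (d - 1))
    (hne : lam ≠ 0) :
    (‖(d : K)‖ < 1 → ‖lam‖ < 1) ∧ (‖(d : K)‖ = 1 → ‖lam‖ = 1) := by
  classical
  set Q : K → K := fun z => z ^ d + t with hQdef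
  have hk0 : 0 < k := hk
  have hd1 : (1:ℕ) ≤ d := by omega
  -- `t` is in the closed unit ball
  have ht1 : ‖t‖ ≤ 1 := by
    by_contra ht; push_neg at ht
    have hQ0 : Q^[1] (0:K) = t := by
      simp only [Function.iterate_one, hQdef]
      rw [zero_pow (by omega : d ≠ 0), zero_add]
    have hf : ∀ m : ℕ, Q^[m+1] (0:K) = Q^[m] t := by
      intro m
      rw [Function.iterate_add_apply Q m 1, hQ0]
    have hnorm : ∀ m : ℕ, ‖Q^[m+1] (0:K)‖ = ‖t‖ ^ (d ^ m) := by
      intro m; rw [hf m]; exact iter_escape hna hd ht le_rfl m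
    have hmono : StrictMono (fun m : ℕ => ‖t‖ ^ (d ^ m)) := by
      intro a b hab
      exact pow_lt_pow_right₀ ht (Nat.pow_lt_pow_right (by omega : 1 < d) hab)
    have hinj : Function.Injective (fun m : ℕ => Q^[m+1] (0:K)) := by
      intro a b hab
      have h2 : ‖t‖ ^ (d ^ a) = ‖t‖ ^ (d ^ b) := by
        rw [← hnorm a, ← hnorm b]
        simp only at hab ⊢; rw [hab]
      exact hmono.injective h2
    exact Set.not_infinite.mpr hfin
      (Set.infinite_of_injective_forall_mem hinj (fun m => ⟨m+1, rfl⟩))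
  -- `w` is in the closed unit ball
  have hw1 : ‖w‖ ≤ 1 := by
    by_contra hww; push_neg at hww
    have hesc := iter_escape hna hd hww (le_trans ht1 hww.le) k
    rw [hw] at hesc
    have h2 : (‖w‖:ℝ) ^ 1 < ‖w‖ ^ (d ^ k) := by
      refine pow_lt_pow_right₀ hww ?_
      have : 2 ^ 1 ≤ d ^ k := Nat.pow_le_pow_left hd k |>.trans' (by simpa using Nat.pow_le_pow_right (by omega) hk)
      omega
    rw [pow_one] at h2; linarith [hesc.symm.le]
  -- cycle points are nonzero
  have hcyc_ne : ∀ i, i < k → Q^[i] w ≠ 0 := by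
    intro i hi h0
    apply hne
    rw [hlam]
    refine Finset.prod_eq_zero (Finset.mem_range.mpr hi) ?_
    rw [h0, zero_pow (by omega : d - 1 ≠ 0), mul_zero]
  have hper : Function.IsPeriodicPt Q k w := hw
  have hmod : ∀ m, Q^[m] w = Q^[m % k] w := fun m => (hper.iterate_mod_apply m).symm
  have hiter_le : ∀ i, ‖Q^[i] w‖ ≤ 1 := fun i => iter_le_one hna hd1 ht1 hw1 i
  have hlamnorm : ‖lam‖ = ∏ i ∈ Finset.range k, ‖(d:K)‖ * ‖Q^[i] w‖ ^ (d-1) := by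
    rw [hlam, norm_prod]
    exact Finset.prod_congr rfl (fun i _ => by rw [norm_mul, norm_pow])
  constructor
  · -- |d| < 1 case
    intro hdlt
    rw [hlamnorm]
    calc ∏ i ∈ Finset.range k, ‖(d:K)‖ * ‖Q^[i] w‖ ^ (d-1)
        ≤ ∏ _i ∈ Finset.range k, ‖(d:K)‖ := by
          refine Finset.prod_le_prod (fun i _ => by positivity) (fun i _ => ?_)
          calc ‖(d:K)‖ * ‖Q^[i] w‖ ^ (d-1) ≤ ‖(d:K)‖ * 1 := by
                refine mul_le_mul_of_nonneg_left ?_ (norm_nonneg _)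
                exact pow_le_one₀ (norm_nonneg _) (hiter_le i)
            _ = ‖(d:K)‖ := mul_one _
      _ = ‖(d:K)‖ ^ k := by rw [Finset.prod_const, Finset.card_range]
      _ ≤ ‖(d:K)‖ ^ 1 := pow_le_pow_of_le_one (norm_nonneg _) hdlt.le hk
      _ < 1 := by rwa [pow_one]
  · -- |d| = 1 case
    intro hdeq
    have hle1 : ‖lam‖ ≤ 1 := by
      rw [hlamnorm]
      refine Finset.prod_le_one (fun i _ => by positivity) (fun i _ => ?_)
      rw [hdeq, one_mul]
      exact pow_le_one₀ (norm_nonneg _) (hiter_le i)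
    rcases lt_or_eq_of_le hle1 with hlt | heq
    swap
    · exact heq
    exfalso
    -- there is a small cycle point
    have hsmall : ∃ i ∈ Finset.range k, ‖Q^[i] w‖ < 1 := by
      by_contra hall; push_neg at hall
      have hone : ∀ i ∈ Finset.range k, ‖(d:K)‖ * ‖Q^[i] w‖ ^ (d-1) = 1 := by
        intro i hi
        rw [hdeq, one_mul, le_antisymm (hiter_le i) (hall i hi), one_pow]
      rw [hlamnorm, Finset.prod_congr rfl hone, Finset.prod_const_one] at hlt
      linarith
    obtain ⟨istar, histar, histlt⟩ := hsmall
    -- minimizer of the norm over the cycle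
    obtain ⟨i0, hi0mem, hi0min⟩ := Finset.exists_min_image (Finset.range k)
      (fun i => ‖Q^[i] w‖) ⟨0, Finset.mem_range.mpr hk0⟩
    set w' : K := Q^[i0] w with hw'def
    set s : ℝ := ‖w'‖ with hsdef
    have hsl1 : s < 1 := lt_of_le_of_lt (hi0min istar histar) histlt
    have hw'iter : ∀ m, Q^[m] w' = Q^[(m + i0) % k] w := by
      intro m
      rw [hw'def, ← Function.iterate_add_apply, ← hmod]
    have hw'ne : ∀ m, Q^[m] w' ≠ 0 := by
      intro m; rw [hw'iter m]; exact hcyc_ne _ (Nat.mod_lt _ hk0)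
    have hw'min : ∀ m, s ≤ ‖Q^[m] w'‖ := by
      intro m; rw [hw'iter m]
      exact hi0min _ (Finset.mem_range.mpr (Nat.mod_lt _ hk0))
    have hspos : (0:ℝ) < s := by
      have := hw'ne 0
      simp only [Function.iterate_zero, id_eq] at this
      exact norm_pos_iff.mpr this
    have hw'per : Q^[k] w' = w' := by
      rw [hw'def, ← Function.iterate_add_apply, Nat.add_comm,
        Function.iterate_add_apply, hw]
    have hw'perpt : Function.IsPeriodicPt Q k w' := hw'per
    have hjk : ∀ j : ℕ, Q^[j*k] w' = w' := by
      intro j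
      have h1 : Function.IsPeriodicPt Q (k*j) w' := hw'perpt.mul_const j
      rw [Nat.mul_comm] at h1
      exact h1
    have hw'le : ∀ m, ‖Q^[m] w'‖ ≤ 1 := fun m => iter_le_one hna hd1 ht1 hsl1.le m
    have hx_le : ∀ m, ‖Q^[m] (0:K)‖ ≤ 1 := fun m =>
      iter_le_one hna hd1 ht1 (by simp) m
    -- the pairing distance
    set δ : ℕ → ℝ := fun m => ‖Q^[m] (0:K) - Q^[m] w'‖ with hδdef
    have hstep : ∀ (a b : K) (M : ℝ), ‖a‖ ≤ M → ‖b‖ ≤ M → M ≤ 1 →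
        ‖Q a - Q b‖ ≤ ‖a - b‖ * M ^ (d-1) := by
      intro a b M ha hb hM
      have h1 : Q a - Q b = a ^ d - b ^ d := by
        simp only [hQdef]; ring
      rw [h1]
      exact pow_sub_pow_bound hna a b d M ha hb
    have hanti : Antitone δ := by
      refine antitone_nat_of_succ_le (fun n => ?_)
      simp only [hδdef, Function.iterate_succ_apply']
      calc ‖Q (Q^[n] 0) - Q (Q^[n] w')‖ ≤ ‖Q^[n] 0 - Q^[n] w'‖ * (1:ℝ) ^ (d-1) :=
            hstep _ _ 1 (hx_le n) (hw'le n) le_rfl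
        _ = ‖Q^[n] 0 - Q^[n] w'‖ := by rw [one_pow, mul_one]
    have hδ0 : δ 0 = s := by
      simp only [hδdef, Function.iterate_zero, id_eq, zero_sub, norm_neg, hsdef]
    -- pigeonhole: the orbit of 0 revisits itself at multiples of k
    have hnotinj : ¬ Function.Injective (fun j : ℕ => Q^[j*k] (0:K)) := by
      intro hinj
      exact Set.not_infinite.mpr hfin
        (Set.infinite_of_injective_forall_mem hinj (fun j => ⟨j*k, rfl⟩))
    obtain ⟨a, b, hab, hne_ab⟩ := Function.not_injective_iff.mp hnotinj
    obtain ⟨j1, j2, hj12, heq12⟩ : ∃ j1 j2 : ℕ, j1 < j2 ∧ Q^[j1*k] (0:K) = Q^[j2*k] 0 := by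
      rcases lt_or_gt_of_ne hne_ab with h | h
      · exact ⟨a, b, h, hab⟩
      · exact ⟨b, a, h, hab.symm⟩
    have hδeq : δ (j1*k) = δ (j2*k) := by
      simp only [hδdef]
      rw [heq12, hjk j1, hjk j2]
    have hδles : δ (j1*k) ≤ s := hδ0 ▸ hanti (Nat.zero_le _)
    have hxnorm : ‖Q^[j1*k] (0:K)‖ ≤ s := by
      calc ‖Q^[j1*k] (0:K)‖ = ‖(Q^[j1*k] (0:K) - Q^[j1*k] w') + Q^[j1*k] w'‖ := by
            rw [sub_add_cancel]
        _ ≤ max ‖Q^[j1*k] (0:K) - Q^[j1*k] w'‖ ‖Q^[j1*k] w'‖ := hna _ _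
        _ ≤ s := max_le hδles (by rw [hjk j1])
    have hcontr : δ (j1*k + 1) ≤ s * δ (j1*k) := by
      simp only [hδdef, Function.iterate_succ_apply']
      calc ‖Q (Q^[j1*k] 0) - Q (Q^[j1*k] w')‖
          ≤ ‖Q^[j1*k] 0 - Q^[j1*k] w'‖ * s ^ (d-1) :=
            hstep _ _ s hxnorm (by rw [hjk j1]) hsl1.le
        _ ≤ ‖Q^[j1*k] 0 - Q^[j1*k] w'‖ * s := by
            refine mul_le_mul_of_nonneg_left ?_ (norm_nonneg _)
            calc s ^ (d-1) ≤ s ^ 1 := pow_le_pow_of_le_one hspos.le hsl1.le (by omega)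
              _ = s := pow_one s
        _ = s * ‖Q^[j1*k] 0 - Q^[j1*k] w'‖ := mul_comm _ _
    have hchain : δ (j2*k) ≤ δ (j1*k + 1) := by
      refine hanti ?_
      have h1 : (j1+1)*k ≤ j2*k := Nat.mul_le_mul_right k hj12
      have h2 : j1*k + 1 ≤ j1*k + k := by omega
      calc j1*k + 1 ≤ j1*k + k := h2
        _ = (j1+1)*k := by ring
        _ ≤ j2*k := h1
    have hδzero : δ (j1*k) = 0 := by
      have h0 : (0:ℝ) ≤ δ (j1*k) := norm_nonneg _
      nlinarith [hδeq, hchain, hcontr]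
    -- the orbits merge
    have hEne : ∃ m : ℕ, Q^[m] (0:K) = Q^[m] w' := by
      refine ⟨j1*k, ?_⟩
      have := hδzero
      simp only [hδdef] at this
      exact sub_eq_zero.mp (norm_eq_zero.mp this)
    set c := Nat.find hEne with hcdef
    have hc : Q^[c] (0:K) = Q^[c] w' := Nat.find_spec hEne
    have hcmin : ∀ m, m < c → Q^[m] (0:K) ≠ Q^[m] w' := fun m hm => Nat.find_min hEne hm
    have hc0 : c ≠ 0 := by
      intro h
      rw [h] at hc
      simp only [Function.iterate_zero, id_eq] at hc
      exact hw'ne 0 (by simp only [Function.iterate_zero, id_eq]; exact hc.symm)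
    have hc1 : c ≠ 1 := by
      intro h
      rw [h] at hc
      simp only [Function.iterate_one, hQdef] at hc
      rw [zero_pow (by omega : d ≠ 0), zero_add] at hc
      have hv : w' ^ d = 0 := by
        have := hc.symm
        have h2 : w' ^ d + t - t = t - t := by rw [this]
        simpa using h2
      refine hw'ne 0 ?_
      simp only [Function.iterate_zero, id_eq]
      exact pow_eq_zero_iff (by omega : d ≠ 0) |>.mp hv
    -- entry point analysis
    have hyv_ne : Q^[c-1] (0:K) ≠ Q^[c-1] w' := hcmin (c-1) (by omega)
    have hQyv : (Q^[c-1] (0:K)) ^ d = (Q^[c-1] w') ^ d := by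
      have hc' : (c - 1).succ = c := by omega
      have h1 := Function.iterate_succ_apply' Q (c-1) (0:K)
      have h2 := Function.iterate_succ_apply' Q (c-1) w'
      rw [hc'] at h1 h2
      have h3 := hc
      rw [h1, h2] at h3
      simp only [hQdef] at h3
      exact add_right_cancel h3
    have hcoll : ‖Q^[c-1] w'‖ ≤ ‖Q^[c-1] (0:K) - Q^[c-1] w'‖ :=
      collision hna hd hdeq hQyv hyv_ne
    have hδ1 : δ 1 = s ^ d := by
      simp only [hδdef, Function.iterate_one, hQdef]
      rw [zero_pow (by omega : d ≠ 0), zero_add]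
      rw [show t - (w' ^ d + t) = -(w' ^ d) by ring, norm_neg, norm_pow]
    have hfinal : s ≤ s ^ d := by
      calc s ≤ ‖Q^[c-1] w'‖ := hw'min (c-1)
        _ ≤ ‖Q^[c-1] (0:K) - Q^[c-1] w'‖ := hcoll
        _ = δ (c-1) := rfl
        _ ≤ δ 1 := hanti (by omega : 1 ≤ c-1)
        _ = s ^ d := hδ1
    have hlast : s ^ d < s := by
      have := pow_lt_pow_right_of_lt_one₀ hspos hsl1 (by omega : 1 < d)
      simpa using this
    linarith
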